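/- Every two-sided ideal of G_d contained in G_d² is a K[Y_d,Z_d]-submodule of G_d² (under the identification v_{α,β} ↔ y^α z^β), and conversely every K[Y_d,Z_d]-submodule of G_d² is a two-sided ideal of G_d. -/

import Mathlib

open MvPolynomial

variable (K : Type) [Field K] (ι : Type)

/-- The ideal of the polynomial ring `K[Y,Z]` (variables `y_i = X (inl i)`,
`z_j = X (inr j)`) generated by the products `y_i * z_j`; its underlying `K`-vector
space is spanned by the monomials `Y^α Z^β` with `|α| > 0` and `|β| > 0`. -/
noncomputable def Vid : Ideal (MvPolynomial (ι ⊕ ι) K) :=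
  Ideal.span {p | ∃ i j, p = X (Sum.inl i) * X (Sum.inr j)}

/-- The linear polynomial `∑ a_i y_i`. -/
noncomputable def Yp (a : ι →₀ K) : MvPolynomial (ι ⊕ ι) K :=
  a.sum fun i c => C c * X (Sum.inl i)

/-- The linear polynomial `∑ b_j z_j`. -/
noncomputable def Zp (b : ι →₀ K) : MvPolynomial (ι ⊕ ι) K :=
  b.sum fun j c => C c * X (Sum.inr j)

/-- The model `G` of the free bicommutative algebra with generators `x_i` indexed
by `ι`: its elements are pairs (linear part in the `x_i`'s, element of the span of
the `v_{α,β} = Y^α Z^β`). -/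
abbrev GA : Type := (ι →₀ K) × (Vid K ι)

lemma mul_mem_Vid (a b : ι →₀ K) (p q : MvPolynomial (ι ⊕ ι) K)
    (hp : p ∈ Vid K ι) (hq : q ∈ Vid K ι) :
    (Yp K ι a + p) * (Zp K ι b + q) ∈ Vid K ι := by
  have hYZ : Yp K ι a * Zp K ι b ∈ Vid K ι := by
    rw [Yp, Zp, Finsupp.sum, Finsupp.sum, Finset.sum_mul_sum]
    refine Submodule.sum_mem _ fun i _ => Submodule.sum_mem _ fun j _ => ?_
    have h : (C (a i) * X (Sum.inl i)) * (C (b j) * X (Sum.inr j))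
        = (C (a i) * C (b j)) * (X (Sum.inl i) * X (Sum.inr j) :
          MvPolynomial (ι ⊕ ι) K) := by ring
    rw [h]
    exact Ideal.mul_mem_left _ _ (Ideal.subset_span ⟨i, j, rfl⟩)
  have e : (Yp K ι a + p) * (Zp K ι b + q)
      = Yp K ι a * Zp K ι b + (Yp K ι a * q + (p * Zp K ι b + p * q)) := by ring
  rw [e]
  exact add_mem hYZ (add_mem (Ideal.mul_mem_left _ _ hq)
    (add_mem (Ideal.mul_mem_right _ _ hp) (Ideal.mul_mem_left _ _ hq)))

/-- The multiplication of `G`: `x_i ∘ x_j = y_i z_j`, `x_i ∘ v_{α,β} = v_{α+ε_i,β}`,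
`v_{α,β} ∘ x_j = v_{α,β+ε_j}`, `v_{α,β} ∘ v_{γ,δ} = v_{α+γ,β+δ}`, extended bilinearly. -/
noncomputable instance : Mul (GA K ι) :=
  ⟨fun u v => (0, ⟨(Yp K ι u.1 + (u.2 : MvPolynomial (ι ⊕ ι) K)) *
      (Zp K ι v.1 + (v.2 : MvPolynomial (ι ⊕ ι) K)),
    mul_mem_Vid K ι u.1 v.1 _ _ u.2.2 v.2.2⟩)⟩

/-- The generator `x_i` of `G`. -/
noncomputable def xE (i : ι) : GA K ι := (Finsupp.single i 1, 0)

/-- The basis element `v_{α,β}` of `G²`, as a predicate on elements of `G`. -/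
def IsVElem (w : GA K ι) (α β : ι →₀ ℕ) : Prop :=
  w.1 = 0 ∧ (w.2 : MvPolynomial (ι ⊕ ι) K) = monomial (Finsupp.sumElim α β) 1

/-- The square `G²` of `G`: the linear span of all products. -/
noncomputable def Gsq : Submodule K (GA K ι) := Submodule.span K {w | ∃ u v : GA K ι, w = u * v}

/-- Two-sided ideals of the (nonassociative) algebra `G`: `K`-subspaces absorbing
multiplication on both sides. -/
def IsTwoSidedIdeal (I : Submodule K (GA K ι)) : Prop :=
  ∀ (a : GA K ι), ∀ x ∈ I, a * x ∈ I ∧ x * a ∈ I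

lemma Yp_zero : Yp K ι 0 = 0 := Finsupp.sum_zero_index

lemma Zp_zero : Zp K ι 0 = 0 := Finsupp.sum_zero_index

lemma Yp_single (i : ι) : Yp K ι (Finsupp.single i 1) = X (Sum.inl i) := by
  rw [Yp, Finsupp.sum_single_index (by simp)]
  simp

lemma Zp_single (j : ι) : Zp K ι (Finsupp.single j 1) = X (Sum.inr j) := by
  rw [Zp, Finsupp.sum_single_index (by simp)]
  simp

lemma mul_fst (u v : GA K ι) : (u * v).1 = 0 := rfl

lemma mul_snd (u v : GA K ι) :
    ((u * v).2 : MvPolynomial (ι ⊕ ι) K) =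
      (Yp K ι u.1 + (u.2 : MvPolynomial (ι ⊕ ι) K)) *
      (Zp K ι v.1 + (v.2 : MvPolynomial (ι ⊕ ι) K)) := rfl

lemma Gsq_fst_eq_zero (w : GA K ι) (hw : w ∈ Gsq K ι) : w.1 = 0 := by
  have h : Gsq K ι ≤ LinearMap.ker (LinearMap.fst K (ι →₀ K) (Vid K ι)) := by
    rw [Gsq, Submodule.span_le]
    rintro w ⟨u, v, rfl⟩
    simp [LinearMap.mem_ker, mul_fst]
  exact h hw

/-- Under the identification `v_{α,β} ↔ y^α z^β` of `G_d²` with the ideal of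
`K[Y_d,Z_d]` generated by the `y_i z_j`, every two-sided ideal of `G_d` contained
in `G_d²` is a `K[Y_d,Z_d]`-submodule of `G_d²` (i.e. its set of polynomial
components is an ideal of `K[Y_d,Z_d]` contained in `Vid`), and conversely every
`K[Y_d,Z_d]`-submodule of `G_d²` is a two-sided ideal of `G_d`. -/
theorem Gd_ideals_in_square_are_polynomial_submodules (d : ℕ) :
    (∀ I : Submodule K (GA K (Fin d)), IsTwoSidedIdeal K (Fin d) I →
      I ≤ Gsq K (Fin d) →
      ∃ J : Ideal (MvPolynomial (Fin d ⊕ Fin d) K), J ≤ Vid K (Fin d) ∧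
        ∀ p : MvPolynomial (Fin d ⊕ Fin d) K,
          p ∈ J ↔ ∃ w ∈ I, ((w : GA K (Fin d)).2 : MvPolynomial (Fin d ⊕ Fin d) K) = p) ∧
    (∀ (J : Ideal (MvPolynomial (Fin d ⊕ Fin d) K)), J ≤ Vid K (Fin d) →
      ∀ I : Submodule K (GA K (Fin d)),
        (∀ w : GA K (Fin d), w ∈ I ↔
          (w.1 = 0 ∧ (w.2 : MvPolynomial (Fin d ⊕ Fin d) K) ∈ J)) →
        IsTwoSidedIdeal K (Fin d) I) := by
  constructor
  · intro I hI hle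
    have hfst : ∀ w ∈ I, w.1 = (0 : Fin d →₀ K) := fun w hw =>
      Gsq_fst_eq_zero K (Fin d) w (hle hw)
    set S : Set (MvPolynomial (Fin d ⊕ Fin d) K) :=
      {p | ∃ w ∈ I, ((w : GA K (Fin d)).2 : MvPolynomial (Fin d ⊕ Fin d) K) = p} with hS
    have hsmul : ∀ (a : K) {p}, p ∈ S → a • p ∈ S := by
      rintro a p ⟨w, hw, rfl⟩
      exact ⟨a • w, I.smul_mem a hw, rfl⟩
    have hX : ∀ (n : Fin d ⊕ Fin d) (p), p ∈ S → X n * p ∈ S := by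
      rintro n p ⟨w, hw, rfl⟩
      cases n with
      | inl i =>
        refine ⟨xE K (Fin d) i * w, (hI _ w hw).1, ?_⟩
        rw [mul_snd, hfst w hw, Zp_zero, zero_add]
        show (Yp K (Fin d) (Finsupp.single i 1) +
          ((0 : Vid K (Fin d)) : MvPolynomial (Fin d ⊕ Fin d) K)) * _ = _
        simp [Yp_single]
      | inr j =>
        refine ⟨w * xE K (Fin d) j, (hI _ w hw).2, ?_⟩
        rw [mul_snd, hfst w hw, Yp_zero, zero_add]
        show _ * (Zp K (Fin d) (Finsupp.single j 1) +
          ((0 : Vid K (Fin d)) : MvPolynomial (Fin d ⊕ Fin d) K)) = _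
        rw [Zp_single]
        push_cast
        ring
    refine ⟨{ carrier := S
              add_mem' := ?_
              zero_mem' := ⟨0, I.zero_mem, rfl⟩
              smul_mem' := ?_ }, ?_, ?_⟩
    · rintro p q ⟨w, hw, rfl⟩ ⟨u, hu, rfl⟩
      exact ⟨w + u, I.add_mem hw hu, rfl⟩
    · intro c p hp
      simp only [smul_eq_mul]
      induction c using MvPolynomial.induction_on with
      | C a =>
        rw [← smul_eq_C_mul]
        exact hsmul a hp
      | add f g hf hg =>
        rw [add_mul]
        obtain ⟨w, hw, hwp⟩ := hf
        obtain ⟨u, hu, hup⟩ := hg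
        exact ⟨w + u, I.add_mem hw hu, by rw [Prod.snd_add, Submodule.coe_add, hwp, hup]⟩
      | mul_X f n hf =>
        have h2 := hX n (f * p) hf
        have e : f * X n * p = X n * (f * p) := by ring
        rw [e]
        exact h2
    · rintro p ⟨w, hw, rfl⟩
      exact w.2.2
    · intro p
      exact Iff.rfl
  · intro J hJV I hIchar a x hx
    obtain ⟨hx1, hx2⟩ := (hIchar x).1 hx
    constructor
    · rw [hIchar]
      refine ⟨mul_fst K (Fin d) a x, ?_⟩
      rw [mul_snd, hx1, Zp_zero, zero_add]
      exact J.mul_mem_left _ hx2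
    · rw [hIchar]
      refine ⟨mul_fst K (Fin d) x a, ?_⟩
      rw [mul_snd, hx1, Yp_zero, zero_add]
      exact J.mul_mem_right _ hx2
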